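/- Let E be a metrizable topological vector space over ℝ, let (x_n) be a sequence in E converging to x ∈ E. Then there exists a strictly monotone map φ : ℕ → ℕ such that the subsequence (x_{φ(k)}) converges fast to x, i.e. for every l ∈ ℕ the sequence k ↦ k^l • (x_{φ(k)} − x) tends to 0 in E as k → ∞. -/

import Mathlib

open Filter Topology

/-- Every convergent sequence in a metrizable topological vector space over ℝ
has a fast converging subsequence: a subsequence `x_{φ k}` such that for every
`l ∈ ℕ`, `k ^ l • (x_{φ k} - x) → 0`. -/
theorem exists_fast_converging_subsequence
    {E : Type*} [AddCommGroup E] [Module ℝ E] [TopologicalSpace E]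
    [IsTopologicalAddGroup E] [ContinuousSMul ℝ E]
    [TopologicalSpace.MetrizableSpace E]
    (x : ℕ → E) (x₀ : E) (hx : Tendsto x atTop (𝓝 x₀)) :
    ∃ φ : ℕ → ℕ, StrictMono φ ∧
      ∀ l : ℕ, Tendsto (fun k : ℕ => ((k : ℝ) ^ l) • (x (φ k) - x₀)) atTop (𝓝 0) := by
  -- `y n = x n - x₀` tends to `0`.
  have hy : Tendsto (fun n => x n - x₀) atTop (𝓝 0) := by
    simpa using hx.sub_const x₀
  -- A countable antitone neighborhood basis of `0`.
  obtain ⟨V, hV⟩ := (𝓝 (0 : E)).exists_antitone_basis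
  -- Extract a subsequence with `(k:ℝ)^k • y (φ k) ∈ V k`.
  have key : ∀ k : ℕ, ∀ᶠ n in atTop, ((k : ℝ) ^ k) • (x n - x₀) ∈ V k := by
    intro k
    have : Tendsto (fun n => ((k : ℝ) ^ k) • (x n - x₀)) atTop (𝓝 0) := by
      simpa using hy.const_smul ((k : ℝ) ^ k)
    exact this.eventually_mem (hV.1.mem_of_mem trivial)
  obtain ⟨φ, hφ, hmem⟩ := Filter.extraction_forall_of_eventually key
  refine ⟨φ, hφ, fun l => ?_⟩
  rw [(nhds_basis_balanced ℝ E).tendsto_right_iff]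
  rintro W ⟨hW, hWbal⟩
  obtain ⟨k₀, -, hk₀⟩ := hV.1.mem_iff.1 hW
  filter_upwards [eventually_ge_atTop (max (max l k₀) 1)] with k hk
  have hk1 : 1 ≤ k := le_trans (le_max_right _ _) hk
  have hkl : l ≤ k := le_trans (le_trans (le_max_left _ _) (le_max_left _ _)) hk
  have hkk0 : k₀ ≤ k := le_trans (le_trans (le_max_right _ _) (le_max_left _ _)) hk
  have hpos : (0 : ℝ) < (k : ℝ) ^ k :=
    pow_pos (by exact_mod_cast hk1) k
  have hmemW : ((k : ℝ) ^ k) • (x (φ k) - x₀) ∈ W :=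
    hk₀ (hV.2 hkk0 (hmem k))
  have hle : (k : ℝ) ^ l ≤ (k : ℝ) ^ k :=
    pow_le_pow_right₀ (by exact_mod_cast hk1) hkl
  have hc : ‖(k : ℝ) ^ l / (k : ℝ) ^ k‖ ≤ 1 := by
    rw [Real.norm_eq_abs, abs_of_nonneg (by positivity)]
    exact div_le_one_of_le₀ hle hpos.le
  have : ((k : ℝ) ^ l / (k : ℝ) ^ k) • (((k : ℝ) ^ k) • (x (φ k) - x₀)) ∈ W :=
    hWbal.smul_mem hc hmemW
  simpa [smul_smul, div_mul_cancel₀ _ hpos.ne'] using this
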